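/- Let θ* ∈ (0, π/2], β a real with β > 2/(1 − cos θ*), and let θ^G ∈ [0, θ*/2] maximize θ ↦ cos^β(θ) + cos^β(θ* − θ) subject to θ ≤ θ*/2. Then θ^G < θ*/2; i.e., when β exceeds the threshold, the maximum of cos^β(θ) + cos^β(θ* − θ) over [0, θ*] is not attained at θ*/2. -/

import Mathlib

open Real

/-- Above the specialization threshold `β > 2/(1 − cos θ*)`, a maximizer `θ^G` of
`θ ↦ cos^β θ + cos^β(θ* − θ)` over `[0, θ*/2]` satisfies `θ^G < θ*/2`. -/
theorem stmt18 (θs β θG : ℝ) (hθs0 : 0 < θs) (hθs1 : θs ≤ π / 2)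
    (hβ : 2 / (1 - Real.cos θs) < β)
    (hG : θG ∈ Set.Icc (0 : ℝ) (θs / 2))
    (hmax : ∀ θ ∈ Set.Icc (0 : ℝ) (θs / 2),
      Real.cos θ ^ β + Real.cos (θs - θ) ^ β
        ≤ Real.cos θG ^ β + Real.cos (θs - θG) ^ β) :
    θG < θs / 2 := by
  have hπ : (0:ℝ) < π := Real.pi_pos
  set c := θs / 2 with hcdef
  have hc0 : 0 < c := by positivity
  have hcpi : c ≤ π / 4 := by rw [hcdef]; linarith
  have hcos1 : Real.cos θs < 1 := by
    have := Real.cos_lt_cos_of_nonneg_of_le_pi (x := 0) (y := θs) le_rfl (by linarith) hθs0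
    simpa using this
  have hd : 0 < 1 - Real.cos θs := by linarith
  have hβ2 : 2 < β * (1 - Real.cos θs) := by
    rw [div_lt_iff₀ hd] at hβ; linarith
  have hβ0 : (0:ℝ) < β := by nlinarith
  have hkey : β * Real.cos c ^ 2 < β - 1 := by
    have h2 : Real.cos c ^ 2 = 1 / 2 + Real.cos θs / 2 := by
      rw [Real.cos_sq c, hcdef]; ring_nf
    nlinarith
  -- get δ > 0 such that the key inequality holds on a neighborhood
  have hcont : ContinuousAt (fun x => β * Real.cos x ^ 2) c := by fun_prop
  have hev : ∀ᶠ x in nhds c, β * Real.cos x ^ 2 < β - 1 :=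
    hcont.eventually_lt continuousAt_const hkey
  obtain ⟨ε, hε, hball⟩ := Metric.eventually_nhds_iff.mp hev
  set δ := min (ε / 2) (c / 2) with hδdef
  have hδ0 : 0 < δ := lt_min (by linarith) (by linarith)
  have hδc : δ ≤ c / 2 := min_le_right _ _
  have hδε : δ < ε := lt_of_le_of_lt (min_le_left _ _) (by linarith)
  have hmem : ∀ x ∈ Set.Icc (c - δ) (c + δ), β * Real.cos x ^ 2 < β - 1 := by
    intro x hx
    apply hball
    rw [Real.dist_eq, abs_lt]
    exact ⟨by linarith [hx.1], by linarith [hx.2]⟩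
  have hcospos : ∀ x ∈ Set.Icc (c - δ) (c + δ), 0 < Real.cos x := by
    intro x hx
    apply Real.cos_pos_of_mem_Ioo
    constructor
    · have := hx.1; nlinarith
    · have := hx.2; nlinarith
  -- the auxiliary function h
  set h : ℝ → ℝ := fun x => Real.cos x ^ (β - 1) * Real.sin x with hhdef
  have hderiv : ∀ x ∈ Set.Icc (c - δ) (c + δ),
      HasDerivAt h (Real.cos x ^ (β - 2) * (β * Real.cos x ^ 2 - (β - 1))) x := by
    intro x hx
    have hcx := hcospos x hx
    have h1 : HasDerivAt (fun y => Real.cos y ^ (β - 1))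
        ((β - 1) * Real.cos x ^ (β - 1 - 1) * (-Real.sin x)) x :=
      (Real.hasDerivAt_rpow_const (p := β - 1) (Or.inl hcx.ne')).comp x (Real.hasDerivAt_cos x)
    have h2 := h1.mul (Real.hasDerivAt_sin x)
    refine h2.congr_deriv (Eq.symm ?_)
    have e1 : Real.cos x ^ (β - 1) = Real.cos x ^ (β - 2) * Real.cos x := by
      have := Real.rpow_add_one hcx.ne' (β - 2)
      rw [show β - 2 + 1 = β - 1 by ring] at this
      exact this
    have e2 : β - 1 - 1 = β - 2 := by ring
    rw [e2, e1]
    have hsc := Real.sin_sq_add_cos_sq x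
    linear_combination (Real.cos x ^ (β - 2)) * (β - 1) * hsc
  have hIcc : Set.Icc (c - δ) (c + δ) ∈ {s : Set ℝ | True} := trivial
  have hcontOn : ContinuousOn h (Set.Icc (c - δ) (c + δ)) := by
    apply ContinuousOn.mul _ Real.continuous_sin.continuousOn
    exact Real.continuous_cos.continuousOn.rpow_const fun x hx => Or.inl (hcospos x hx).ne'
  have hanti : StrictAntiOn h (Set.Icc (c - δ) (c + δ)) := by
    apply strictAntiOn_of_deriv_neg (convex_Icc _ _) hcontOn
    intro x hx
    rw [interior_Icc] at hx
    have hx' : x ∈ Set.Icc (c - δ) (c + δ) := Set.Ioo_subset_Icc_self hx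
    rw [(hderiv x hx').deriv]
    have := hmem x hx'
    have := Real.rpow_pos_of_pos (hcospos x hx') (β - 2)
    nlinarith
  -- the objective function g
  set g : ℝ → ℝ := fun θ => Real.cos θ ^ β + Real.cos (θs - θ) ^ β with hgdef
  have hθsc : θs = 2 * c := by rw [hcdef]; ring
  have hmemg : ∀ θ ∈ Set.Icc (c - δ) c, (θs - θ) ∈ Set.Icc (c - δ) (c + δ) := by
    intro θ hθ
    constructor
    · have := hθ.2; rw [hθsc]; linarith
    · have := hθ.1; rw [hθsc]; linarith
  have hgderiv : ∀ θ ∈ Set.Icc (c - δ) c,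
      HasDerivAt g (β * (h (θs - θ) - h θ)) θ := by
    intro θ hθ
    have hθ' : θ ∈ Set.Icc (c - δ) (c + δ) := ⟨hθ.1, by linarith [hθ.2, hδ0]⟩
    have hc1 := hcospos θ hθ'
    have hc2 := hcospos (θs - θ) (hmemg θ hθ)
    have H1 : HasDerivAt (fun θ => Real.cos θ ^ β)
        (β * Real.cos θ ^ (β - 1) * (-Real.sin θ)) θ :=
      (Real.hasDerivAt_rpow_const (p := β) (Or.inl hc1.ne')).comp θ (Real.hasDerivAt_cos θ)
    have Hin : HasDerivAt (fun θ : ℝ => Real.cos (θs - θ)) (-Real.sin (θs - θ) * -1) θ :=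
      (Real.hasDerivAt_cos (θs - θ)).comp θ ((hasDerivAt_id θ).const_sub θs)
    have H2 : HasDerivAt (fun θ => Real.cos (θs - θ) ^ β)
        (β * Real.cos (θs - θ) ^ (β - 1) * (-Real.sin (θs - θ) * -1)) θ :=
      (Real.hasDerivAt_rpow_const (p := β) (Or.inl hc2.ne')).comp (h₂ := fun y => y ^ β) θ Hin
    have := H1.add H2
    refine this.congr_deriv (Eq.symm ?_)
    simp only [hhdef]
    ring
  have hgcont : ContinuousOn g (Set.Icc (c - δ) c) := by
    apply ContinuousOn.add
    · apply ContinuousOn.rpow_const Real.continuous_cos.continuousOn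
      intro x hx
      exact Or.inl (hcospos x ⟨hx.1, by linarith [hx.2, hδ0]⟩).ne'
    · apply ContinuousOn.rpow_const (Real.continuous_cos.comp_continuousOn
        (continuous_const.sub continuous_id).continuousOn)
      intro x hx
      exact Or.inl (hcospos _ (hmemg x hx)).ne'
  have hganti : StrictAntiOn g (Set.Icc (c - δ) c) := by
    apply strictAntiOn_of_deriv_neg (convex_Icc _ _) hgcont
    intro θ hθ
    rw [interior_Icc] at hθ
    have hθ' : θ ∈ Set.Icc (c - δ) c := Set.Ioo_subset_Icc_self hθ
    rw [(hgderiv θ hθ').deriv]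
    have hlt : h (θs - θ) < h θ := by
      apply hanti ⟨hθ'.1, by linarith [hθ'.2, hδ0]⟩ (hmemg θ hθ')
      rw [hθsc]; linarith [hθ.2]
    nlinarith
  -- conclude
  have hKey : g c < g (c - δ) := by
    exact hganti ⟨le_rfl, by linarith⟩ ⟨by linarith, le_rfl⟩ (by linarith)
  by_contra hcon
  have hGc : θG = c := le_antisymm hG.2 (not_lt.mp hcon)
  have := hmax (c - δ) ⟨by linarith, by linarith⟩
  rw [hGc] at this
  have : g (c - δ) ≤ g c := this
  linarith
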